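/- (Mordukhovich's criterion at infinity, subdifferential form.) Let F : ℝ^n ⇉ ℝ^m be a set-valued mapping with closed graph and ȳ ∈ J(F). Then D*F(∞, ȳ)(0) = {0} if and only if 𝓕^∞ = {0}, where 𝓕^∞ denotes the set of all w ∈ ℝ^n × ℝ^m for which there exist sequences (x_k, y_k) ∈ gph F with ‖x_k‖ → ∞ and y_k → ȳ, real numbers r_k > 0 with r_k → 0, and w_k ∈ ∂d_F(x_k, y_k) with r_k·w_k → w. -/

import Mathlib

open Filter Topology Set Metric Pointwise
open scoped RealInnerProductSpace ENNReal

noncomputable section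

variable {E F G : Type*}
  [NormedAddCommGroup E] [InnerProductSpace ℝ E]
  [NormedAddCommGroup F] [InnerProductSpace ℝ F]
  [NormedAddCommGroup G] [InnerProductSpace ℝ G]

/-- The regular (Fréchet) normal cone to a subset of a product of inner product
spaces, at a point `p` (empty if `p ∉ Ω`). -/
def frechetNormalCone2 (Ω : Set (E × F)) (p : E × F) : Set (E × F) :=
  {ξ | p ∈ Ω ∧ ∀ ε > (0:ℝ), ∀ᶠ q in nhdsWithin p Ω,
      ⟪ξ.1, q.1 - p.1⟫ + ⟪ξ.2, q.2 - p.2⟫ ≤ ε * ‖q - p‖}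

/-- The limiting (Mordukhovich) normal cone. -/
def limitingNormalCone2 (Ω : Set (E × F)) (p : E × F) : Set (E × F) :=
  {ξ | ∃ pk : ℕ → E × F, ∃ ξk : ℕ → E × F,
    (∀ k, pk k ∈ Ω) ∧ Tendsto pk atTop (𝓝 p) ∧
    (∀ k, ξk k ∈ frechetNormalCone2 Ω (pk k)) ∧ Tendsto ξk atTop (𝓝 ξ)}

/-- The normal cone to `Ω ⊆ E × F` at `(∞, ȳ)`. -/
def normalConeAtInfty (Ω : Set (E × F)) (ybar : F) : Set (E × F) :=
  {ξ | ∃ pk : ℕ → E × F, ∃ ξk : ℕ → E × F,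
    (∀ k, pk k ∈ Ω) ∧ Tendsto (fun k => ‖(pk k).1‖) atTop atTop ∧
    Tendsto (fun k => (pk k).2) atTop (𝓝 ybar) ∧
    (∀ k, ξk k ∈ frechetNormalCone2 Ω (pk k)) ∧ Tendsto ξk atTop (𝓝 ξ)}

/-- `Ω ⊆ E × F` is locally closed at `(∞, ȳ)`. -/
def LocallyClosedAtInfty (Ω : Set (E × F)) (ybar : F) : Prop :=
  ∃ R > (0:ℝ), ∃ V ∈ 𝓝 ybar, IsClosed V ∧
    IsClosed (Ω ∩ {p : E × F | R ≤ ‖p.1‖ ∧ p.2 ∈ V})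

/-- Graph of a set-valued mapping. -/
def svGraph (S : E → Set F) : Set (E × F) := {p | p.2 ∈ S p.1}

/-- Jelonek set of a set-valued mapping. -/
def jelonek (S : E → Set F) : Set F :=
  {y | ∃ xk : ℕ → E, ∃ yk : ℕ → F,
    Tendsto (fun k => ‖xk k‖) atTop atTop ∧ (∀ k, yk k ∈ S (xk k)) ∧
    Tendsto yk atTop (𝓝 y)}

/-- Coderivative of a set-valued mapping at a point of its graph. -/
def coderiv (S : E → Set F) (x : E) (y : F) (v : F) : Set E :=
  {u | (u, -v) ∈ limitingNormalCone2 (svGraph S) (x, y)}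

/-- Coderivative of a set-valued mapping at `(∞, ȳ)`. -/
def coderivAtInfty (S : E → Set F) (ybar : F) (v : F) : Set E :=
  {u | (u, -v) ∈ normalConeAtInfty (svGraph S) ybar}

/-- Regular normal cone, one-space version. -/
def frechetNormalCone1 (Ω : Set E) (x : E) : Set E :=
  {ξ | x ∈ Ω ∧ ∀ ε > (0:ℝ), ∀ᶠ x' in nhdsWithin x Ω, ⟪ξ, x' - x⟫ ≤ ε * ‖x' - x‖}

/-- Normal cone at infinity to an unbounded subset of `E`. -/
def normalConeAtInfty1 (Ω : Set E) : Set E :=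
  {ξ | ∃ xk : ℕ → E, ∃ ξk : ℕ → E, (∀ k, xk k ∈ Ω) ∧
    Tendsto (fun k => ‖xk k‖) atTop atTop ∧
    (∀ k, ξk k ∈ frechetNormalCone1 Ω (xk k)) ∧ Tendsto ξk atTop (𝓝 ξ)}

/-- Epigraph of an extended-real-valued function. -/
def epiSet (f : E → EReal) : Set (E × ℝ) := {p | f p.1 ≤ (p.2 : EReal)}

/-- Graph of an extended-real-valued function, as a subset of `E × ℝ`. -/
def gphFun (f : E → EReal) : Set (E × ℝ) := {p | f p.1 = (p.2 : EReal)}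

/-- Jelonek set of a function. -/
def jelonekFun (f : E → EReal) : Set ℝ :=
  {y | ∃ xk : ℕ → E, Tendsto (fun k => ‖xk k‖) atTop atTop ∧
    Tendsto (fun k => f (xk k)) atTop (𝓝 (y : EReal))}

/-- Limiting subdifferential of `f` at `x` (empty outside `dom f`). -/
def limSubdiff (f : E → EReal) (x : E) : Set E :=
  {u | ∃ r : ℝ, f x = (r : EReal) ∧
    (u, (-1 : ℝ)) ∈ limitingNormalCone2 (epiSet f) (x, r)}

/-- Limiting subdifferential of `f` at `(∞, ȳ)`. -/
def limSubdiffAtInfty (f : E → EReal) (ybar : ℝ) : Set E :=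
  {u | (u, (-1 : ℝ)) ∈ normalConeAtInfty (epiSet f) ybar}

/-- Singular subdifferential of `f` at `(∞, ȳ)`. -/
def singSubdiffAtInfty (f : E → EReal) (ybar : ℝ) : Set E :=
  {u | (u, (0 : ℝ)) ∈ normalConeAtInfty (epiSet f) ybar}

/-- Inverse of a set-valued mapping. -/
def svInv (S : E → Set F) (y : F) : Set E := {x | y ∈ S x}

/-- Preimage `F⁻¹(V) = {x : F(x) ∩ V ≠ ∅}`. -/
def svPreimage (S : E → Set F) (V : Set F) : Set E := {x | (S x ∩ V).Nonempty}

/-- Distance function of a set-valued mapping, with value `+∞` on empty values. -/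
def dSV (S : E → Set F) (p : E × F) : EReal :=
  ((EMetric.infEdist p.2 (S p.1) : ℝ≥0∞) : EReal)

/-- Regular normal cone on `(E × F) × ℝ`. -/
def frechetNormalCone3 (Ω : Set ((E × F) × ℝ)) (p : (E × F) × ℝ) : Set ((E × F) × ℝ) :=
  {ξ | p ∈ Ω ∧ ∀ ε > (0:ℝ), ∀ᶠ q in nhdsWithin p Ω,
      ⟪ξ.1.1, q.1.1 - p.1.1⟫ + ⟪ξ.1.2, q.1.2 - p.1.2⟫ + ξ.2 * (q.2 - p.2)
        ≤ ε * ‖q - p‖}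

/-- Limiting normal cone on `(E × F) × ℝ`. -/
def limitingNormalCone3 (Ω : Set ((E × F) × ℝ)) (p : (E × F) × ℝ) : Set ((E × F) × ℝ) :=
  {ξ | ∃ pk ξk : ℕ → (E × F) × ℝ, (∀ k, pk k ∈ Ω) ∧ Tendsto pk atTop (𝓝 p) ∧
    (∀ k, ξk k ∈ frechetNormalCone3 Ω (pk k)) ∧ Tendsto ξk atTop (𝓝 ξ)}

/-- Limiting subdifferential of the distance function `d_F`. -/
def limSubdiffD (S : E → Set F) (p : E × F) : Set (E × F) :=
  {w | ∃ r : ℝ, dSV S p = (r : EReal) ∧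
    (w, (-1 : ℝ)) ∈ limitingNormalCone3 {q : (E × F) × ℝ | dSV S q.1 ≤ (q.2 : EReal)} (p, r)}

/-- The set `J⁺(F₁ + F₂, y)`. -/
def jplus (S₁ S₂ : E → Set F) (y : F) : Set (F × F) :=
  {q | ∃ xk : ℕ → E, ∃ y1k y2k : ℕ → F,
    Tendsto (fun k => ‖xk k‖) atTop atTop ∧
    (∀ k, y1k k ∈ S₁ (xk k)) ∧ (∀ k, y2k k ∈ S₂ (xk k)) ∧
    Tendsto y1k atTop (𝓝 q.1) ∧ Tendsto y2k atTop (𝓝 q.2) ∧ q.1 + q.2 = y}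

/-- The set `J°(F₂ ∘ F₁, y)`. -/
def jcirc (S₁ : E → Set G) (S₂ : G → Set F) (y : F) : Set G :=
  {z | ∃ xk : ℕ → E, ∃ zk : ℕ → G, ∃ yk : ℕ → F,
    Tendsto (fun k => ‖xk k‖) atTop atTop ∧ (∀ k, zk k ∈ S₁ (xk k)) ∧
    (∀ k, yk k ∈ S₂ (zk k)) ∧ Tendsto zk atTop (𝓝 z) ∧ Tendsto yk atTop (𝓝 y)}

/-- Composition `F₂ ∘ F₁` of set-valued mappings. -/
def svComp (S₂ : G → Set F) (S₁ : E → Set G) (x : E) : Set F :=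
  {y | ∃ z ∈ S₁ x, y ∈ S₂ z}

abbrev Eucl (n : ℕ) := EuclideanSpace ℝ (Fin n)


set_option linter.unusedSectionVars false

lemma fst_norm_le_dist (a b : E × F) : ‖a.1 - b.1‖ ≤ dist a b := by
  rw [Prod.dist_eq, ← dist_eq_norm]
  exact le_max_left _ _

lemma snd_norm_le_dist (a b : E × F) : ‖a.2 - b.2‖ ≤ dist a b := by
  rw [Prod.dist_eq, ← dist_eq_norm]
  exact le_max_right _ _

lemma zero_mem_fnc2 {Ω : Set (E × F)} {p : E × F} (hp : p ∈ Ω) :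
    (0 : E × F) ∈ frechetNormalCone2 Ω p := by
  refine ⟨hp, fun ε hε => Filter.Eventually.of_forall fun q => ?_⟩
  simp only [Prod.fst_zero, Prod.snd_zero, inner_zero_left, add_zero]
  positivity

lemma smul_mem_fnc2 {Ω : Set (E × F)} {p ξ : E × F} {c : ℝ} (hc : 0 < c)
    (hξ : ξ ∈ frechetNormalCone2 Ω p) : c • ξ ∈ frechetNormalCone2 Ω p := by
  refine ⟨hξ.1, fun ε hε => ?_⟩
  filter_upwards [hξ.2 (ε / c) (by positivity)] with q hq
  have h2 : c * ((ε / c) * ‖q - p‖) = ε * ‖q - p‖ := by field_simp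
  have h3 := mul_le_mul_of_nonneg_left hq hc.le
  rw [h2] at h3
  simpa only [Prod.smul_fst, Prod.smul_snd, real_inner_smul_left, mul_add] using h3

lemma dSV_of_graph {S : E → Set F} {p : E × F} (hp : p ∈ svGraph S) :
    dSV S p = ((0 : ℝ) : EReal) := by
  have hp' : p.2 ∈ S p.1 := hp
  unfold dSV
  rw [EMetric.infEdist, EMetric.infEdist_zero_of_mem hp']
  simp

lemma sect_closed {S : E → Set F} (hS : IsClosed (svGraph S)) (x : E) :
    IsClosed (S x) := by
  have : S x = (fun y => ((x, y) : E × F)) ⁻¹' (svGraph S) := rfl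
  rw [this]
  exact hS.preimage (Continuous.prodMk_right x)

lemma dSV_le_coe {S : E → Set F} {x : E} {y v : F} {c : ℝ}
    (hv : v ∈ S x) (hd : dist y v ≤ c) : dSV S (x, y) ≤ (c : EReal) := by
  have h1 : EMetric.infEdist y (S x) ≤ ENNReal.ofReal c := by
    refine le_trans (EMetric.infEdist_le_edist_of_mem hv) ?_
    rw [edist_dist]
    exact ENNReal.ofReal_le_ofReal hd
  calc dSV S (x, y) ≤ ((ENNReal.ofReal c : ℝ≥0∞) : EReal) :=
        EReal.coe_ennreal_le_coe_ennreal_iff.2 h1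
    _ = (c : EReal) := by
        rw [EReal.coe_ennreal_ofReal, max_eq_left (le_trans dist_nonneg hd)]

lemma exists_nearest [ProperSpace F] {S : E → Set F} (hS : IsClosed (svGraph S))
    {x : E} {y : F} {t : ℝ} (h : dSV S (x, y) ≤ (t : EReal)) :
    ∃ v ∈ S x, dist y v ≤ t := by
  have hne : EMetric.infEdist y (S x) ≠ ⊤ := by
    intro htop
    rw [dSV] at h
    rw [htop, EReal.coe_ennreal_top, top_le_iff] at h
    exact EReal.coe_ne_top t h
  have hSne : (S x).Nonempty := by
    by_contra hemp
    rw [Set.not_nonempty_iff_eq_empty] at hemp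
    rw [hemp, EMetric.infEdist, EMetric.infEdist_empty] at hne
    exact hne rfl
  obtain ⟨v, hv, hvd⟩ := (sect_closed hS x).exists_infDist_eq_dist hSne y
  refine ⟨v, hv, ?_⟩
  rw [← hvd]
  have hcoe : (EMetric.infEdist y (S x) : EReal)
      = ((Metric.infDist y (S x) : ℝ) : EReal) := by
    rw [Metric.infDist]
    conv_lhs => rw [← ENNReal.ofReal_toReal hne]
    rw [EReal.coe_ennreal_ofReal, max_eq_left ENNReal.toReal_nonneg]
    rfl
  rw [dSV] at h
  rw [hcoe] at h
  exact_mod_cast h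

/-- The epigraph of the distance function. -/
def epiD (S : E → Set F) : Set ((E × F) × ℝ) := {q | dSV S q.1 ≤ (q.2 : EReal)}

lemma mem_epiD_iff {S : E → Set F} {q : (E×F)×ℝ} :
    q ∈ epiD S ↔ dSV S q.1 ≤ (q.2 : EReal) := Iff.rfl

/-- L1: a Fréchet normal to the graph with small second component is a Fréchet
subgradient of the distance function. -/
lemma fnc2_to_fnc3 [ProperSpace F] {S : E → Set F} (hS : IsClosed (svGraph S))
    {p ξ : E × F} (hξ : ξ ∈ frechetNormalCone2 (svGraph S) p) (h2 : ‖ξ.2‖ ≤ 1) :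
    ((ξ, (-1:ℝ)) : (E×F)×ℝ) ∈ frechetNormalCone3 (epiD S) (p, 0) := by
  obtain ⟨hp, hfre⟩ := hξ
  refine ⟨le_of_eq (dSV_of_graph hp), fun ε hε => ?_⟩
  have h3 := hfre (ε/2) (by positivity)
  rw [Filter.eventually_iff, Metric.mem_nhdsWithin_iff] at h3
  obtain ⟨δ, hδ, hsub⟩ := h3
  rw [Filter.eventually_iff, Metric.mem_nhdsWithin_iff]
  refine ⟨δ/3, by positivity, ?_⟩
  rintro ⟨q, t⟩ ⟨hball, hmem⟩
  rw [Metric.mem_ball, Prod.dist_eq, max_lt_iff] at hball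
  obtain ⟨hb1, hb2⟩ := hball
  rw [mem_epiD_iff] at hmem
  obtain ⟨v, hv, hdv⟩ := exists_nearest hS hmem
  have ht0 : (0:ℝ) ≤ t := le_trans dist_nonneg hdv
  have hb2' : |t| < δ/3 := by rwa [Real.dist_eq, sub_zero] at hb2
  set q' : E × F := (q.1, v) with hq'
  have hq'mem : q' ∈ svGraph S := hv
  have hdq' : dist q' p ≤ t + dist q p := by
    refine le_trans (dist_triangle q' q p) ?_
    have : dist q' q ≤ t := by
      rw [Prod.dist_eq]
      simp only [hq', dist_self]
      rw [max_le_iff]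
      exact ⟨ht0, le_trans (dist_comm q.2 v ▸ hdv) le_rfl⟩
    linarith
  have hq'ball : q' ∈ Metric.ball p δ := by
    rw [Metric.mem_ball]
    have := abs_le.mp hb2'.le
    calc dist q' p ≤ t + dist q p := hdq'
      _ < δ/3 + δ/3 := by
          apply add_lt_add_of_le_of_lt _ hb1
          linarith [hb2', le_abs_self t]
      _ < δ := by linarith
  have hkey := hsub ⟨hq'ball, hq'mem⟩
  simp only [Set.mem_setOf_eq] at hkey
  -- hkey : ⟪ξ.1, q.1 - p.1⟫ + ⟪ξ.2, v - p.2⟫ ≤ ε/2 * ‖q' - p‖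
  have hsplit : ⟪ξ.2, q.2 - p.2⟫ = ⟪ξ.2, v - p.2⟫ + ⟪ξ.2, q.2 - v⟫ := by
    rw [← inner_add_right]
    congr 1
    abel
  have hbound : ⟪ξ.2, q.2 - v⟫ ≤ t := by
    calc ⟪ξ.2, q.2 - v⟫ ≤ ‖ξ.2‖ * ‖q.2 - v‖ := real_inner_le_norm _ _
      _ ≤ 1 * ‖q.2 - v‖ := by
          apply mul_le_mul_of_nonneg_right h2 (norm_nonneg _)
      _ = dist q.2 v := by rw [one_mul, dist_eq_norm]
      _ ≤ t := hdv
  have hN : dist q' p ≤ 2 * dist ((q,t) : (E×F)×ℝ) ((p,0) : (E×F)×ℝ) := by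
    have h1 : dist q p ≤ dist ((q,t) : (E×F)×ℝ) ((p,0) : (E×F)×ℝ) := by
      rw [Prod.dist_eq]; exact le_max_left _ _
    have h2' : t ≤ dist ((q,t) : (E×F)×ℝ) ((p,0) : (E×F)×ℝ) := by
      rw [Prod.dist_eq]
      have habs : |t| = dist (((q,t) : (E×F)×ℝ)).2 (((p,0) : (E×F)×ℝ)).2 := by
        simp [Real.dist_eq]
      exact le_trans (le_abs_self t) (habs ▸ le_max_right _ _)
    linarith [hdq']
  have hfinal : ε/2 * ‖q' - p‖ ≤ ε * dist ((q,t) : (E×F)×ℝ) ((p,0) : (E×F)×ℝ) := by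
    rw [← dist_eq_norm]
    calc ε/2 * dist q' p ≤ ε/2 * (2 * dist ((q,t) : (E×F)×ℝ) ((p,0) : (E×F)×ℝ)) := by
          apply mul_le_mul_of_nonneg_left hN (by positivity)
      _ = ε * dist ((q,t) : (E×F)×ℝ) ((p,0) : (E×F)×ℝ) := by ring
  show ⟪ξ.1, q.1 - p.1⟫ + ⟪ξ.2, q.2 - p.2⟫ + (-1) * (t - 0)
      ≤ ε * ‖((q,t) : (E×F)×ℝ) - ((p,0) : (E×F)×ℝ)‖
  rw [← dist_eq_norm]
  have : ⟪ξ.1, q.1 - p.1⟫ + ⟪ξ.2, q.2 - p.2⟫ + (-1) * (t - 0)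
      ≤ ⟪ξ.1, q.1 - p.1⟫ + ⟪ξ.2, v - p.2⟫ := by
    rw [hsplit]; linarith
  calc ⟪ξ.1, q.1 - p.1⟫ + ⟪ξ.2, q.2 - p.2⟫ + (-1) * (t - 0)
      ≤ ⟪ξ.1, q.1 - p.1⟫ + ⟪ξ.2, v - p.2⟫ := this
    _ ≤ ε/2 * ‖q' - p‖ := hkey
    _ ≤ ε * dist ((q,t) : (E×F)×ℝ) ((p,0) : (E×F)×ℝ) := hfinal

/-- L2: bounds on Fréchet normals to the epigraph of the distance function. -/
lemma fnc3_bound [ProperSpace F] {S : E → Set F} (hS : IsClosed (svGraph S))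
    {q ζ : (E×F)×ℝ} (hζ : ζ ∈ frechetNormalCone3 (epiD S) q) :
    ζ.2 ≤ 0 ∧ ‖ζ.1.2‖ ≤ -ζ.2 := by
  obtain ⟨hmem, hfre⟩ := hζ
  rw [mem_epiD_iff] at hmem
  obtain ⟨v, hv, hdv⟩ := exists_nearest hS hmem
  -- Part 1 : ζ.2 ≤ 0
  have part1 : ζ.2 ≤ 0 := by
    by_contra hpos
    push_neg at hpos
    have h3 := hfre (ζ.2/2) (by linarith)
    rw [Filter.eventually_iff, Metric.mem_nhdsWithin_iff] at h3
    obtain ⟨δ, hδ, hsub⟩ := h3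
    set s : ℝ := δ/2 with hs
    have hs0 : 0 < s := by positivity
    have hmem' : ((q.1, q.2 + s) : (E×F)×ℝ) ∈ epiD S := by
      rw [mem_epiD_iff]
      exact le_trans hmem (by exact_mod_cast by linarith : (q.2 : EReal) ≤ ((q.2 + s : ℝ) : EReal))
    have hnorm : ‖((q.1, q.2 + s) : (E×F)×ℝ) - q‖ = s := by
      have h5 : ((q.1, q.2 + s) : (E×F)×ℝ) - q = ((0, s) : (E×F)×ℝ) := by
        rw [Prod.ext_iff]
        exact ⟨by simp, by simp⟩
      rw [h5, Prod.norm_def, norm_zero, Real.norm_eq_abs, abs_of_pos hs0,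
        max_eq_right hs0.le]
    have hball : ((q.1, q.2 + s) : (E×F)×ℝ) ∈ Metric.ball q δ := by
      rw [Metric.mem_ball, dist_eq_norm, hnorm]
      linarith
    have hkey := hsub ⟨hball, hmem'⟩
    simp only [Set.mem_setOf_eq, sub_self, inner_zero_right, add_zero, zero_add] at hkey
    rw [hnorm] at hkey
    -- hkey : ζ.2 * (q.2 + s - q.2) ≤ ζ.2/2 * s
    have : ζ.2 * s ≤ ζ.2/2 * s := by
      have h4 : q.2 + s - q.2 = s := by ring
      calc ζ.2 * s = ζ.2 * (q.2 + s - q.2) := by rw [h4]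
        _ ≤ ζ.2/2 * s := hkey
    nlinarith
  refine ⟨part1, ?_⟩
  -- Part 2 : ‖ζ.1.2‖ ≤ -ζ.2
  by_cases hz : ζ.1.2 = 0
  · rw [hz, norm_zero]; linarith
  have hc : 0 < ‖ζ.1.2‖ := norm_pos_iff.mpr hz
  set c : ℝ := ‖ζ.1.2‖ with hcdef
  by_contra hlt
  push_neg at hlt
  -- c + ζ.2 > 0 ; choose ε := (c + ζ.2)/2
  have hε : 0 < (c + ζ.2)/2 := by linarith
  have h3 := hfre _ hε
  rw [Filter.eventually_iff, Metric.mem_nhdsWithin_iff] at h3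
  obtain ⟨δ, hδ, hsub⟩ := h3
  set s : ℝ := δ/(2*c) with hs
  have hs0 : 0 < s := by positivity
  have hsc : s * c < δ := by
    rw [hs]; rw [div_mul_eq_mul_div]
    rw [div_lt_iff₀ (by positivity)]
    nlinarith
  set q' : (E×F)×ℝ := ((q.1.1, q.1.2 + s • ζ.1.2), q.2 + s*c) with hq'
  have hdist : dist (q.1.2 + s • ζ.1.2) q.1.2 = s*c := by
    rw [dist_eq_norm]
    simp [norm_smul, Real.norm_eq_abs, abs_of_pos hs0, hcdef]
  have hmem' : q' ∈ epiD S := by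
    rw [mem_epiD_iff]
    have : dist (q.1.2 + s • ζ.1.2) v ≤ q.2 + s*c := by
      calc dist (q.1.2 + s • ζ.1.2) v ≤ dist (q.1.2 + s • ζ.1.2) q.1.2 + dist q.1.2 v :=
            dist_triangle _ _ _
        _ ≤ s*c + q.2 := by rw [hdist]; linarith
        _ = q.2 + s*c := by ring
    exact dSV_le_coe hv this
  have hnorm : ‖q' - q‖ = s*c := by
    have h5 : q' - q = (((0 : E), s • ζ.1.2), s*c) := by
      rw [hq', Prod.ext_iff, Prod.ext_iff]
      refine ⟨⟨by simp, by simp⟩, by simp⟩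
    rw [h5, Prod.norm_def, Prod.norm_def, norm_zero, norm_smul, Real.norm_eq_abs,
      Real.norm_eq_abs, abs_of_pos hs0, abs_of_pos (by positivity : (0:ℝ) < s*c), ← hcdef]
    rw [max_eq_right (mul_pos hs0 hc).le, max_self]
  have hball : q' ∈ Metric.ball q δ := by
    rw [Metric.mem_ball, dist_eq_norm, hnorm]
    exact hsc
  have hkey := hsub ⟨hball, hmem'⟩
  simp only [Set.mem_setOf_eq] at hkey
  have hsimp : ⟪ζ.1.1, (q.1.1 : E) - q.1.1⟫ + ⟪ζ.1.2, q.1.2 + s • ζ.1.2 - q.1.2⟫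
      + ζ.2 * (q.2 + s*c - q.2) = s*c^2 + ζ.2 * (s*c) := by
    simp [real_inner_smul_right, real_inner_self_eq_norm_sq, ← hcdef]
  rw [hnorm] at hkey
  have hkey2 : s*c^2 + ζ.2*(s*c) ≤ (c + ζ.2)/2 * (s*c) := by
    rw [← hsimp]; exact hkey
  nlinarith [mul_pos hs0 hc, mul_pos (mul_pos hs0 hc) hε]

/-- L3: a Fréchet normal to the epigraph of the distance function yields a Fréchet
normal to the graph at a nearby point of the graph. -/
lemma fnc3_to_fnc2 [ProperSpace F] {S : E → Set F} (hS : IsClosed (svGraph S))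
    {q ζ : (E×F)×ℝ} (hζ : ζ ∈ frechetNormalCone3 (epiD S) q) :
    ∃ v : F, (q.1.1, v) ∈ svGraph S ∧ dist q.1.2 v ≤ q.2 ∧
      ζ.1 ∈ frechetNormalCone2 (svGraph S) (q.1.1, v) := by
  obtain ⟨hmem, hfre⟩ := hζ
  rw [mem_epiD_iff] at hmem
  obtain ⟨v, hv, hdv⟩ := exists_nearest hS hmem
  refine ⟨v, hv, hdv, hv, fun ε hε => ?_⟩
  have h3 := hfre ε hε
  rw [Filter.eventually_iff, Metric.mem_nhdsWithin_iff] at h3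
  obtain ⟨δ, hδ, hsub⟩ := h3
  rw [Filter.eventually_iff, Metric.mem_nhdsWithin_iff]
  refine ⟨δ, hδ, ?_⟩
  rintro ⟨x', y'⟩ ⟨hball, hmemg⟩
  rw [Metric.mem_ball] at hball
  -- auxiliary point in the epigraph
  set p' : (E×F)×ℝ := ((x', y' + (q.1.2 - v)), q.2) with hp'
  have hdiff : p' - q = ((x' - q.1.1, y' - v), 0) := by
    rw [Prod.ext_iff, Prod.ext_iff]
    refine ⟨⟨rfl, ?_⟩, ?_⟩
    · show y' + (q.1.2 - v) - q.1.2 = y' - v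
      abel
    · show q.2 - q.2 = (0:ℝ)
      simp
  have hdiff2 : ((x', y') : E × F) - (q.1.1, v) = (x' - q.1.1, y' - v) := rfl
  have hnorm : ‖p' - q‖ = ‖((x', y') : E × F) - (q.1.1, v)‖ := by
    have h6 : ‖(((x' - q.1.1, y' - v), (0:ℝ)) : (E×F)×ℝ)‖
        = max ‖((x' - q.1.1, y' - v) : E × F)‖ ‖(0:ℝ)‖ := rfl
    rw [hdiff, hdiff2, h6, norm_zero, max_eq_left (norm_nonneg _)]
  have hp'mem : p' ∈ epiD S := by
    rw [mem_epiD_iff]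
    have hd : dist (y' + (q.1.2 - v)) y' ≤ q.2 := by
      rw [dist_eq_norm, add_sub_cancel_left, ← dist_eq_norm]
      exact hdv
    exact dSV_le_coe hmemg hd
  have hp'ball : p' ∈ Metric.ball q δ := by
    rw [Metric.mem_ball, dist_eq_norm, hnorm, ← dist_eq_norm]
    exact hball
  have hkey := hsub ⟨hp'ball, hp'mem⟩
  simp only [Set.mem_setOf_eq] at hkey
  rw [hnorm] at hkey
  -- rewrite the inner products
  have e1 : (p'.1.1 : E) - q.1.1 = x' - q.1.1 := by simp [hp']
  have e2 : (p'.1.2 : F) - q.1.2 = y' - v := by rw [hp']; show y' + (q.1.2 - v) - q.1.2 = y' - v; abel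
  have e3 : (p'.2 : ℝ) - q.2 = 0 := by simp [hp']
  rw [e1, e2, e3, mul_zero, add_zero] at hkey
  exact hkey

lemma zero_mem_limSubdiffD [ProperSpace F] {S : E → Set F} (hS : IsClosed (svGraph S))
    {p : E × F} (hp : p ∈ svGraph S) : (0 : E × F) ∈ limSubdiffD S p := by
  refine ⟨0, dSV_of_graph hp, ?_⟩
  refine ⟨fun _ => (p, 0), fun _ => (((0:E×F)), -1), fun _ => le_of_eq (dSV_of_graph hp),
    tendsto_const_nhds, fun _ => ?_, tendsto_const_nhds⟩
  exact fnc2_to_fnc3 hS (zero_mem_fnc2 hp) (by simp)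

lemma limSubdiffD_snd_bound [ProperSpace F] {S : E → Set F} (hS : IsClosed (svGraph S))
    {p w : E × F} (hw : w ∈ limSubdiffD S p) : ‖w.2‖ ≤ 1 := by
  obtain ⟨r, hr, pk, ζk, hmem, htend, hfn, hζtend⟩ := hw
  have h1 : Tendsto (fun j => ‖(ζk j).1.2‖) atTop (𝓝 ‖((w, (-1:ℝ)) : (E×F)×ℝ).1.2‖) :=
    ((continuous_norm.comp (continuous_snd.comp continuous_fst)).tendsto _).comp hζtend
  have h2 : Tendsto (fun j => -(ζk j).2) atTop (𝓝 (-((w, (-1:ℝ)) : (E×F)×ℝ).2)) :=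
    ((continuous_neg.comp continuous_snd).tendsto _).comp hζtend
  have h3 : ∀ j, ‖(ζk j).1.2‖ ≤ -(ζk j).2 := fun j => (fnc3_bound hS (hfn j)).2
  have := le_of_tendsto_of_tendsto' h1 h2 h3
  simpa using this

lemma limSubdiffD_approx [ProperSpace F] {S : E → Set F} (hS : IsClosed (svGraph S))
    {p w : E × F} (hp : p ∈ svGraph S) (hw : w ∈ limSubdiffD S p) {η : ℝ} (hη : 0 < η) :
    ∃ p' ζ : E × F, p' ∈ svGraph S ∧ dist p' p < η ∧
      ζ ∈ frechetNormalCone2 (svGraph S) p' ∧ ‖ζ - w‖ < η := by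
  obtain ⟨r, hr, pk, ζk, hmem, htend, hfn, hζtend⟩ := hw
  have hr0 : r = 0 := by
    rw [dSV_of_graph hp] at hr
    exact_mod_cast hr.symm
  subst hr0
  -- choose a large index
  have hev1 : ∀ᶠ j in atTop, dist (pk j) ((p, 0) : (E×F)×ℝ) < η/2 :=
    (Metric.tendsto_nhds.mp htend) _ (by positivity)
  have hev2 : ∀ᶠ j in atTop, dist (ζk j) ((w, (-1:ℝ)) : (E×F)×ℝ) < η :=
    (Metric.tendsto_nhds.mp hζtend) _ hη
  obtain ⟨j, hj1, hj2⟩ := (hev1.and hev2).exists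
  obtain ⟨v, hvg, hvd, hvf⟩ := fnc3_to_fnc2 hS (hfn j)
  refine ⟨((pk j).1.1, v), (ζk j).1, hvg, ?_, hvf, ?_⟩
  · -- dist bound
    have e1 : dist (pk j).1.1 p.1 ≤ dist (pk j) ((p, 0) : (E×F)×ℝ) := by
      rw [Prod.dist_eq, Prod.dist_eq]
      exact le_max_of_le_left (le_max_left _ _)
    have e2 : dist (pk j).1.2 p.2 ≤ dist (pk j) ((p, 0) : (E×F)×ℝ) := by
      rw [Prod.dist_eq, Prod.dist_eq]
      exact le_max_of_le_left (le_max_right _ _)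
    have e3 : (pk j).2 ≤ dist (pk j) ((p, 0) : (E×F)×ℝ) := by
      rw [Prod.dist_eq]
      refine le_trans (le_abs_self _) (le_trans (le_of_eq ?_) (le_max_right _ _))
      rw [Real.dist_eq, sub_zero]
    have h0t : 0 ≤ (pk j).2 := le_trans dist_nonneg hvd
    rw [Prod.dist_eq, max_lt_iff]
    constructor
    · exact lt_of_le_of_lt e1 (by linarith)
    · calc dist v p.2 ≤ dist v (pk j).1.2 + dist (pk j).1.2 p.2 := dist_triangle _ _ _
        _ ≤ (pk j).2 + dist (pk j).1.2 p.2 := by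
            rw [dist_comm]; exact add_le_add_left hvd _
        _ < η/2 + η/2 := add_lt_add (lt_of_le_of_lt e3 hj1) (lt_of_le_of_lt e2 hj1)
        _ = η := by ring
  · -- norm bound
    have : ‖(ζk j).1 - w‖ ≤ dist (ζk j) ((w, (-1:ℝ)) : (E×F)×ℝ) := by
      rw [dist_eq_norm]
      exact norm_fst_le ((ζk j) - ((w, (-1:ℝ)) : (E×F)×ℝ))
    exact lt_of_le_of_lt this hj2


/-- Mordukhovich's criterion at infinity, subdifferential form. -/
theorem stmt17 {n m : ℕ} (S : Eucl n → Set (Eucl m)) (hS : IsClosed (svGraph S))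
    (ybar : Eucl m) (hJ : ybar ∈ jelonek S) :
    coderivAtInfty S ybar 0 = ({0} : Set (Eucl n)) ↔
      {w : Eucl n × Eucl m |
        ∃ pk : ℕ → Eucl n × Eucl m, ∃ rk : ℕ → ℝ, ∃ wk : ℕ → Eucl n × Eucl m,
          (∀ k, pk k ∈ svGraph S) ∧
          Tendsto (fun k => ‖(pk k).1‖) atTop atTop ∧
          Tendsto (fun k => (pk k).2) atTop (𝓝 ybar) ∧
          (∀ k, 0 < rk k) ∧ Tendsto rk atTop (𝓝 0) ∧
          (∀ k, wk k ∈ limSubdiffD S (pk k)) ∧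
          Tendsto (fun k => rk k • wk k) atTop (𝓝 w)} = {0} := by
  obtain ⟨xk0, yk0, hx0, hy0mem, hy0⟩ := hJ
  have hpk0 : ∀ k, ((xk0 k, yk0 k) : Eucl n × Eucl m) ∈ svGraph S := fun k => hy0mem k
  constructor
  · intro hL
    apply Set.eq_singleton_iff_unique_mem.mpr
    constructor
    · exact ⟨fun k => (xk0 k, yk0 k), fun k => 1/((k:ℝ)+1), fun _ => 0, hpk0, hx0, hy0,
        fun k => by positivity, tendsto_one_div_add_atTop_nhds_zero_nat,
        fun k => zero_mem_limSubdiffD hS (hpk0 k), by simpa using tendsto_const_nhds⟩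
    · rintro w ⟨pk, rk, wk, hpk, hxk, hyk, hrk, hrk0, hwk, hwtend⟩
      have hb : ∀ k, ‖(wk k).2‖ ≤ 1 := fun k => limSubdiffD_snd_bound hS (hwk k)
      have hw2 : w.2 = 0 := by
        have h1 : Tendsto (fun k => (rk k • wk k).2) atTop (𝓝 w.2) :=
          (continuous_snd.tendsto _).comp hwtend
        have h2 : Tendsto (fun k => (rk k • wk k).2) atTop (𝓝 0) := by
          apply squeeze_zero_norm (a := fun k => rk k) ?_ hrk0
          intro k
          have h3 : (rk k • wk k).2 = rk k • (wk k).2 := rfl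
          rw [h3, norm_smul, Real.norm_eq_abs, abs_of_pos (hrk k)]
          calc rk k * ‖(wk k).2‖ ≤ rk k * 1 :=
                mul_le_mul_of_nonneg_left (hb k) (hrk k).le
            _ = rk k := mul_one _
        exact tendsto_nhds_unique h1 h2
      have hchoice : ∀ k, ∃ p' ζ : Eucl n × Eucl m, p' ∈ svGraph S ∧
          dist p' (pk k) < (1/((k:ℝ)+1)) / (1 + rk k) ∧
          ζ ∈ frechetNormalCone2 (svGraph S) p' ∧ ‖ζ - wk k‖ < (1/((k:ℝ)+1)) / (1 + rk k) := by
        intro k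
        have hrkk := hrk k
        have hpos : 0 < (1/((k:ℝ)+1)) / (1 + rk k) := by positivity
        exact limSubdiffD_approx hS (hpk k) (hwk k) hpos
      choose p' ζ hp'g hp'd hζf hζn using hchoice
      have hηle : ∀ k : ℕ, (1/((k:ℝ)+1)) / (1 + rk k) ≤ 1/((k:ℝ)+1) := by
        intro k
        apply div_le_self (by positivity) (by linarith [hrk k])
      have hd1 : ∀ k, dist (p' k) (pk k) ≤ 1/((k:ℝ)+1) := fun k => (hp'd k).le.trans (hηle k)
      have hone : ∀ k : ℕ, (1/((k:ℝ)+1)) ≤ 1 := by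
        intro k
        rw [div_le_one (by positivity)]
        have hnn : (0:ℝ) ≤ (k:ℝ) := Nat.cast_nonneg k
        linarith
      have hx' : Tendsto (fun k => ‖(p' k).1‖) atTop atTop := by
        apply tendsto_atTop_mono (f := fun k => ‖(pk k).1‖ - 1)
        · intro k
          have h5 : ‖(pk k).1‖ - ‖(p' k).1‖ ≤ ‖(pk k).1 - (p' k).1‖ := norm_sub_norm_le _ _
          have h6 : ‖(pk k).1 - (p' k).1‖ ≤ dist (pk k) (p' k) := fst_norm_le_dist _ _
          have h7 : dist (pk k) (p' k) ≤ 1 := by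
            rw [dist_comm]
            exact (hd1 k).trans (hone k)
          linarith
        · have := tendsto_atTop_add_const_right atTop (-1 : ℝ) hxk
          simpa [sub_eq_add_neg] using this
      have hy' : Tendsto (fun k => (p' k).2) atTop (𝓝 ybar) := by
        rw [← tendsto_sub_nhds_zero_iff]
        apply squeeze_zero_norm (a := fun k : ℕ => 1/((k:ℝ)+1) + ‖(pk k).2 - ybar‖)
        · intro k
          have h5 : ‖(p' k).2 - ybar‖ ≤ ‖(p' k).2 - (pk k).2‖ + ‖(pk k).2 - ybar‖ := by
            have := norm_add_le ((p' k).2 - (pk k).2) ((pk k).2 - ybar)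
            simpa using this
          have h6 : ‖(p' k).2 - (pk k).2‖ ≤ dist (p' k) (pk k) := snd_norm_le_dist _ _
          have h7 := hd1 k
          linarith
        · have h8 := (tendsto_sub_nhds_zero_iff.mpr hyk).norm
          simpa using tendsto_one_div_add_atTop_nhds_zero_nat.add h8
      have htζ : Tendsto (fun k => rk k • ζ k) atTop (𝓝 w) := by
        rw [← tendsto_sub_nhds_zero_iff]
        apply squeeze_zero_norm (a := fun k : ℕ => 1/((k:ℝ)+1) + ‖rk k • wk k - w‖)
        · intro k
          have h8 : rk k • ζ k - w = rk k • (ζ k - wk k) + (rk k • wk k - w) := by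
            rw [smul_sub]; abel
          rw [h8]
          refine (norm_add_le _ _).trans ?_
          have h9 : ‖rk k • (ζ k - wk k)‖ ≤ 1/((k:ℝ)+1) := by
            rw [norm_smul, Real.norm_eq_abs, abs_of_pos (hrk k)]
            have h10 : rk k * ‖ζ k - wk k‖ ≤ rk k * ((1/((k:ℝ)+1)) / (1 + rk k)) :=
              mul_le_mul_of_nonneg_left (hζn k).le (hrk k).le
            refine h10.trans ?_
            have h11 : rk k * ((1/((k:ℝ)+1)) / (1 + rk k))
                = (1/((k:ℝ)+1)) * (rk k / (1 + rk k)) := by ring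
            rw [h11]
            have h12 : rk k / (1 + rk k) ≤ 1 := by
              rw [div_le_one (by linarith [hrk k])]
              linarith [hrk k]
            calc (1/((k:ℝ)+1)) * (rk k / (1 + rk k)) ≤ (1/((k:ℝ)+1)) * 1 :=
                  mul_le_mul_of_nonneg_left h12 (by positivity)
              _ = 1/((k:ℝ)+1) := mul_one _
          linarith
        · have h13 := (tendsto_sub_nhds_zero_iff.mpr hwtend).norm
          simpa using tendsto_one_div_add_atTop_nhds_zero_nat.add h13
      have hmemN : w.1 ∈ coderivAtInfty S ybar 0 := by
        have hwe : ((w.1, -(0 : Eucl m)) : Eucl n × Eucl m) = w := by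
          rw [neg_zero]
          exact Prod.ext_iff.mpr ⟨rfl, hw2.symm⟩
        refine ⟨p', fun k => rk k • ζ k, hp'g, hx', hy',
          fun k => smul_mem_fnc2 (hrk k) (hζf k), ?_⟩
        rw [hwe]
        exact htζ
      rw [hL] at hmemN
      exact Prod.ext_iff.mpr ⟨hmemN, hw2⟩
  · intro hR
    apply Set.eq_singleton_iff_unique_mem.mpr
    constructor
    · refine ⟨fun k => (xk0 k, yk0 k), fun _ => 0, hpk0, hx0, hy0,
        fun k => zero_mem_fnc2 (hpk0 k), ?_⟩
      rw [neg_zero]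
      exact tendsto_const_nhds
    · intro u hu
      obtain ⟨pk, ξk, hpk, hxk, hyk, hfk, hξt⟩ := hu
      have hξ2 : Tendsto (fun k => (ξk k).2) atTop (𝓝 0) := by
        have := (continuous_snd.tendsto _).comp hξt
        simpa [Function.comp_def] using this
      set rk : ℕ → ℝ := fun k => ‖(ξk k).2‖ + 1/((k:ℝ)+1) with hrkdef
      have hrkpos : ∀ k, 0 < rk k := by
        intro k
        rw [hrkdef]
        positivity
      have hrk0 : Tendsto rk atTop (𝓝 0) := by
        rw [hrkdef]
        have h1 := hξ2.norm
        simpa [one_div] using h1.add tendsto_one_div_add_atTop_nhds_zero_nat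
      set wk : ℕ → Eucl n × Eucl m := fun k => (rk k)⁻¹ • ξk k with hwkdef
      have hle : ∀ k : ℕ, ‖(ξk k).2‖ ≤ rk k := by
        intro k
        rw [hrkdef]
        have : (0:ℝ) < 1/((k:ℝ)+1) := by positivity
        simp only
        linarith
      have hb : ∀ k, ‖(wk k).2‖ ≤ 1 := by
        intro k
        have h2 : (wk k).2 = (rk k)⁻¹ • (ξk k).2 := rfl
        rw [h2, norm_smul, Real.norm_eq_abs, abs_of_pos (inv_pos.mpr (hrkpos k))]
        calc (rk k)⁻¹ * ‖(ξk k).2‖ ≤ (rk k)⁻¹ * rk k :=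
              mul_le_mul_of_nonneg_left (hle k) (inv_pos.mpr (hrkpos k)).le
          _ = 1 := inv_mul_cancel₀ (hrkpos k).ne'
      have hsub : ∀ k, wk k ∈ limSubdiffD S (pk k) := by
        intro k
        refine ⟨0, dSV_of_graph (hpk k), fun _ => (pk k, 0), fun _ => ((wk k), -1),
          fun _ => le_of_eq (dSV_of_graph (hpk k)), tendsto_const_nhds, fun _ => ?_,
          tendsto_const_nhds⟩
        exact fnc2_to_fnc3 hS (smul_mem_fnc2 (inv_pos.mpr (hrkpos k)) (hfk k)) (hb k)
      have hsm : ∀ k, rk k • wk k = ξk k := fun k => smul_inv_smul₀ (hrkpos k).ne' _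
      have htend' : Tendsto (fun k => rk k • wk k) atTop (𝓝 ((u, -(0 : Eucl m)))) := by
        have h3 : (fun k => rk k • wk k) = ξk := funext hsm
        rw [h3]
        exact hξt
      rw [Set.eq_singleton_iff_unique_mem] at hR
      have h0 := hR.2 (u, -(0 : Eucl m))
        ⟨pk, rk, wk, hpk, hxk, hyk, hrkpos, hrk0, hsub, htend'⟩
      have h4 := Prod.ext_iff.mp h0
      simpa using h4.1
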